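/- Let V_cut be a vertex cut separating V_1 ∋ s and V_2 ∋ t, and U = V \ V_cut. Then r(s,t) = e_s^T L_{V_1V_1}^{-1} e_s + e_t^T L_{V_2V_2}^{-1} e_t + (p_s - p_t)^T (L/V_cut)^† (p_s - p_t), where p_u is the u-th row of -L_{UU}^{-1} L_{U V_cut} and L/V_cut = L_{V_cut V_cut} - L_{V_cut U} L_{UU}^{-1} L_{U V_cut} is the Schur complement of L onto V_cut. -/

import Mathlib

open Matrix

/-- Every real symmetric matrix has a Moore–Penrose pseudoinverse. -/
lemma exists_penrose {m : Type*} [Fintype m] [DecidableEq m] {A : Matrix m m ℝ}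
    (hA : A.IsHermitian) :
    ∃ B, A * B * A = A ∧ B * A * B = B ∧ (A * B)ᵀ = A * B ∧ (B * A)ᵀ = B * A := by
  set V : Matrix m m ℝ := (hA.eigenvectorUnitary : Matrix m m ℝ) with hV
  have hVV : star V * V = 1 := by
    simpa [hV] using (unitary.star_mul_self (hA.eigenvectorUnitary))
  have hVV' : V * star V = 1 := by
    simpa [hV] using (unitary.mul_star_self (hA.eigenvectorUnitary))
  set d : m → ℝ := hA.eigenvalues with hd
  have hspec : A = V * diagonal d * star V := by
    simpa [hV, hd] using hA.spectral_theorem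
  refine ⟨V * diagonal (fun i => (d i)⁻¹) * star V, ?_, ?_, ?_, ?_⟩
  · rw [hspec]
    have : diagonal d * diagonal (fun i => (d i)⁻¹) * diagonal d = diagonal d := by
      have key : ∀ i, d i * (d i)⁻¹ * d i = d i := fun i => by
        rcases eq_or_ne (d i) 0 with h | h
        · simp [h]
        · rw [mul_inv_cancel₀ h, one_mul]
      rw [diagonal_mul_diagonal, diagonal_mul_diagonal]
      exact congrArg diagonal (funext key)
    calc V * diagonal d * star V * (V * diagonal (fun i => (d i)⁻¹) * star V) *
          (V * diagonal d * star V)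
        = V * (diagonal d * (star V * V) * diagonal (fun i => (d i)⁻¹) * (star V * V) *
            diagonal d) * star V := by noncomm_ring
      _ = V * diagonal d * star V := by rw [hVV]; simp only [mul_one, Matrix.mul_one]; rw [this]
  · rw [hspec]
    have : diagonal (fun i => (d i)⁻¹) * diagonal d * diagonal (fun i => (d i)⁻¹)
        = diagonal (fun i => (d i)⁻¹) := by
      have key : ∀ i, (d i)⁻¹ * d i * (d i)⁻¹ = (d i)⁻¹ := fun i => by
        rcases eq_or_ne (d i) 0 with h | h
        · simp [h]
        · rw [inv_mul_cancel₀ h, one_mul]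
      rw [diagonal_mul_diagonal, diagonal_mul_diagonal]
      exact congrArg diagonal (funext key)
    calc V * diagonal (fun i => (d i)⁻¹) * star V * (V * diagonal d * star V) *
          (V * diagonal (fun i => (d i)⁻¹) * star V)
        = V * (diagonal (fun i => (d i)⁻¹) * (star V * V) * diagonal d * (star V * V) *
            diagonal (fun i => (d i)⁻¹)) * star V := by noncomm_ring
      _ = V * diagonal (fun i => (d i)⁻¹) * star V := by
          rw [hVV]; simp only [mul_one, Matrix.mul_one]; rw [this]
  · rw [hspec]
    have h1 : V * diagonal d * star V * (V * diagonal (fun i => (d i)⁻¹) * star V)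
        = V * diagonal (fun i => d i * (d i)⁻¹) * star V := by
      calc V * diagonal d * star V * (V * diagonal (fun i => (d i)⁻¹) * star V)
          = V * (diagonal d * (star V * V) * diagonal (fun i => (d i)⁻¹)) * star V := by
            noncomm_ring
        _ = V * diagonal (fun i => d i * (d i)⁻¹) * star V := by
            rw [hVV]; simp only [mul_one, Matrix.mul_one, diagonal_mul_diagonal]
    rw [h1]
    have hstar : star V = Vᵀ := by
      ext i j; simp [Matrix.star_apply]
    rw [hstar]
    rw [Matrix.transpose_mul, Matrix.transpose_mul, Matrix.transpose_transpose,
      Matrix.diagonal_transpose, Matrix.mul_assoc]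
  · rw [hspec]
    have h1 : V * diagonal (fun i => (d i)⁻¹) * star V * (V * diagonal d * star V)
        = V * diagonal (fun i => (d i)⁻¹ * d i) * star V := by
      calc V * diagonal (fun i => (d i)⁻¹) * star V * (V * diagonal d * star V)
          = V * (diagonal (fun i => (d i)⁻¹) * (star V * V) * diagonal d) * star V := by
            noncomm_ring
        _ = V * diagonal (fun i => (d i)⁻¹ * d i) * star V := by
            rw [hVV]; simp only [mul_one, Matrix.mul_one, diagonal_mul_diagonal]
    rw [h1]
    have hstar : star V = Vᵀ := by
      ext i j; simp [Matrix.star_apply]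
    rw [hstar]
    rw [Matrix.transpose_mul, Matrix.transpose_mul, Matrix.transpose_transpose,
      Matrix.diagonal_transpose, Matrix.mul_assoc]

open scoped Classical in
/-- Moore-Penrose pseudoinverse of a real matrix (chosen via the Penrose conditions). -/
noncomputable def matPinv {m : Type*} [Fintype m] (A : Matrix m m ℝ) : Matrix m m ℝ :=
  if h : ∃ B, A * B * A = A ∧ B * A * B = B ∧ (A * B)ᵀ = A * B ∧ (B * A)ᵀ = B * A
  then h.choose else 0

lemma matPinv_spec {m : Type*} [Fintype m] [DecidableEq m] {A : Matrix m m ℝ}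
    (hA : A.IsHermitian) :
    A * matPinv A * A = A ∧ matPinv A * A * matPinv A = matPinv A ∧
      (A * matPinv A)ᵀ = A * matPinv A ∧ (matPinv A * A)ᵀ = matPinv A * A := by
  have h := exists_penrose hA
  rw [matPinv, dif_pos h]
  exact h.choose_spec

/-- A proper principal submatrix of the Laplacian of a connected graph is positive definite. -/
lemma lap_submatrix_posDef {n : ℕ} (G : SimpleGraph (Fin n)) [DecidableRel G.Adj]
    (hG : G.Connected) (W : Finset (Fin n)) (hW : ∃ w, w ∉ W) :
    ((G.lapMatrix ℝ).submatrix (Subtype.val : {x // x ∈ W} → Fin n) Subtype.val).PosDef := by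
  classical
  set L := G.lapMatrix ℝ with hL
  refine Matrix.posDef_iff_dotProduct_mulVec.mpr ⟨?_, ?_⟩
  · have hs : Lᵀ = L := G.isSymm_lapMatrix (R := ℝ)
    ext i j
    simp only [conjTranspose_apply, submatrix_apply, star_trivial]
    conv_lhs => rw [← hs]
    rfl
  · intro x hx
    set y : Fin n → ℝ := fun i => if h : i ∈ W then x ⟨i, h⟩ else 0 with hy
    have hyW : ∀ (u : {x // x ∈ W}), y u.val = x u := by
      intro u; simp [hy, u.prop]
    have hquad : star x ⬝ᵥ ((L.submatrix (Subtype.val : {x // x ∈ W} → Fin n)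
        Subtype.val) *ᵥ x) = y ⬝ᵥ (L *ᵥ y) := by
      rw [star_trivial]
      symm
      have hinner : ∀ i : Fin n, (L *ᵥ y) i = ∑ j ∈ W, L i j * y j := by
        intro i
        rw [mulVec, dotProduct]
        refine (Finset.sum_subset (Finset.subset_univ W) ?_).symm
        intro j _ hj
        simp [hy, hj]
      calc y ⬝ᵥ (L *ᵥ y) = ∑ i : Fin n, y i * (L *ᵥ y) i := rfl
        _ = ∑ i ∈ W, y i * (L *ᵥ y) i :=
          (Finset.sum_subset (Finset.subset_univ W) (by intro i _ hi; simp [hy, hi])).symm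
        _ = ∑ u : {x // x ∈ W}, y u.val * (L *ᵥ y) u.val :=
          (Finset.sum_coe_sort W (fun i => y i * (L *ᵥ y) i)).symm
        _ = ∑ u : {x // x ∈ W}, x u * ((L.submatrix (Subtype.val : {x // x ∈ W} → Fin n)
            Subtype.val) *ᵥ x) u := by
          refine Finset.sum_congr rfl ?_
          intro u _
          rw [hyW, hinner]
          congr 1
          rw [← Finset.sum_coe_sort W (fun j => L u.val j * y j)]
          refine Finset.sum_congr rfl ?_
          intro v _
          rw [hyW]
          rfl
        _ = x ⬝ᵥ ((L.submatrix (Subtype.val : {x // x ∈ W} → Fin n) Subtype.val) *ᵥ x) := rfl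
    rw [hquad]
    have hnn : 0 ≤ y ⬝ᵥ (L *ᵥ y) := by
      have := (SimpleGraph.posSemidef_lapMatrix ℝ G).dotProduct_mulVec_nonneg y
      rwa [star_trivial] at this
    rcases lt_or_eq_of_le hnn with h | h
    · exact h
    · exfalso
      have hz : Matrix.toLinearMap₂' ℝ L y y = 0 := by
        rw [Matrix.toLinearMap₂'_apply']
        exact h.symm
      rw [SimpleGraph.lapMatrix_toLinearMap₂'_apply'_eq_zero_iff_forall_reachable] at hz
      obtain ⟨w, hw⟩ := hW
      have hy0 : ∀ i, y i = 0 := by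
        intro i
        have := hz i w (hG.preconnected i w)
        rw [this]
        simp [hy, hw]
      apply hx
      funext u
      have := hy0 u.val
      rwa [hyW] at this

/-- Resistance distance r(s,t) = (e_s - e_t)ᵀ L† (e_s - e_t). -/
noncomputable def rdist {n : ℕ} (G : SimpleGraph (Fin n)) [DecidableRel G.Adj]
    (s t : Fin n) : ℝ :=
  (Pi.single s 1 - Pi.single t 1 : Fin n → ℝ) ⬝ᵥ
    (matPinv (G.lapMatrix ℝ) *ᵥ (Pi.single s 1 - Pi.single t 1))

set_option maxHeartbeats 1000000 in
/-- Cut property of resistance distance: with a vertex cut `Vcut` separating the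
component set `V1 ∋ s` from `V2 ∋ t` (inside `U = V \ Vcut`),
`r(s,t) = e_sᵀ L_{V1V1}⁻¹ e_s + e_tᵀ L_{V2V2}⁻¹ e_t + (p_s - p_t)ᵀ (L/Vcut)† (p_s - p_t)`. -/
theorem resistance_cut_property {n : ℕ} (G : SimpleGraph (Fin n))
    [DecidableRel G.Adj] (hG : G.Connected)
    (Vcut V1 V2 : Finset (Fin n)) (hcut : Vcut.Nonempty)
    (hV1U : V1 ⊆ Vcutᶜ) (hV2U : V2 ⊆ Vcutᶜ) (hdisj : Disjoint V1 V2)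
    (hclosed1 : ∀ a ∈ V1, ∀ b, G.Adj a b → b ∈ V1 ∪ Vcut)
    (hclosed2 : ∀ a ∈ V2, ∀ b, G.Adj a b → b ∈ V2 ∪ Vcut)
    (s t : Fin n) (hs : s ∈ V1) (ht : t ∈ V2) :
    let L := G.lapMatrix ℝ
    let LUU : Matrix {x // x ∈ Vcutᶜ} {x // x ∈ Vcutᶜ} ℝ :=
      L.submatrix Subtype.val Subtype.val
    let LUC : Matrix {x // x ∈ Vcutᶜ} {x // x ∈ Vcut} ℝ :=
      L.submatrix Subtype.val Subtype.val
    let LCU : Matrix {x // x ∈ Vcut} {x // x ∈ Vcutᶜ} ℝ :=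
      L.submatrix Subtype.val Subtype.val
    let LCC : Matrix {x // x ∈ Vcut} {x // x ∈ Vcut} ℝ :=
      L.submatrix Subtype.val Subtype.val
    let S : Matrix {x // x ∈ Vcut} {x // x ∈ Vcut} ℝ := LCC - LCU * LUU⁻¹ * LUC
    let p : {x // x ∈ Vcutᶜ} → {x // x ∈ Vcut} → ℝ :=
      fun u c => -((LUU⁻¹ * LUC) u c)
    let L1 : Matrix {x // x ∈ V1} {x // x ∈ V1} ℝ :=
      L.submatrix Subtype.val Subtype.val
    let L2 : Matrix {x // x ∈ V2} {x // x ∈ V2} ℝ :=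
      L.submatrix Subtype.val Subtype.val
    rdist G s t =
      (Pi.single ⟨s, hs⟩ 1 : {x // x ∈ V1} → ℝ) ⬝ᵥ (L1⁻¹ *ᵥ Pi.single ⟨s, hs⟩ 1) +
      (Pi.single ⟨t, ht⟩ 1 : {x // x ∈ V2} → ℝ) ⬝ᵥ (L2⁻¹ *ᵥ Pi.single ⟨t, ht⟩ 1) +
      (p ⟨s, hV1U hs⟩ - p ⟨t, hV2U ht⟩) ⬝ᵥ
        (matPinv S *ᵥ (p ⟨s, hV1U hs⟩ - p ⟨t, hV2U ht⟩)) := by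
  intro L LUU LUC LCU LCC S p L1 L2
  -- basic symmetry facts
  have hLsym : Lᵀ = L := G.isSymm_lapMatrix (R := ℝ)
  have hLab : ∀ a b : Fin n, L a b = L b a := by
    intro a b
    have h := congrFun (congrFun hLsym a) b
    rw [Matrix.transpose_apply] at h
    exact h.symm
  have hLherm : L.IsHermitian := (SimpleGraph.posSemidef_lapMatrix ℝ G).1
  -- membership facts
  have hsU : s ∈ Vcutᶜ := hV1U hs
  have htU : t ∈ Vcutᶜ := hV2U ht
  have hsC : s ∉ Vcut := Finset.mem_compl.mp hsU
  have htC : t ∉ Vcut := Finset.mem_compl.mp htU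
  have htn1 : t ∉ V1 := fun h => (Finset.disjoint_left.mp hdisj h) ht
  have hsn2 : s ∉ V2 := fun h => (Finset.disjoint_left.mp hdisj hs) h
  obtain ⟨w0, hw0⟩ := hcut
  have hw0n1 : w0 ∉ V1 := fun h => (Finset.mem_compl.mp (hV1U h)) hw0
  have hw0n2 : w0 ∉ V2 := fun h => (Finset.mem_compl.mp (hV2U h)) hw0
  have hw0nU : w0 ∉ Vcutᶜ := fun h => (Finset.mem_compl.mp h) hw0
  -- zero off-block entries
  have hzero1 : ∀ a ∈ V1, ∀ b, b ∉ V1 → b ∉ Vcut → L a b = 0 := by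
    intro a ha b hb1 hbC
    have hne : a ≠ b := fun h => hb1 (h ▸ ha)
    have hnadj : ¬ G.Adj a b := by
      intro h
      rcases Finset.mem_union.mp (hclosed1 a ha b h) with h' | h'
      · exact hb1 h'
      · exact hbC h'
    show (G.degMatrix ℝ - G.adjMatrix ℝ) a b = 0
    rw [Matrix.sub_apply]
    rw [SimpleGraph.degMatrix, Matrix.diagonal_apply_ne _ hne]
    simp [hnadj]
  have hzero2 : ∀ a ∈ V2, ∀ b, b ∉ V2 → b ∉ Vcut → L a b = 0 := by
    intro a ha b hb1 hbC
    have hne : a ≠ b := fun h => hb1 (h ▸ ha)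
    have hnadj : ¬ G.Adj a b := by
      intro h
      rcases Finset.mem_union.mp (hclosed2 a ha b h) with h' | h'
      · exact hb1 h'
      · exact hbC h'
    show (G.degMatrix ℝ - G.adjMatrix ℝ) a b = 0
    rw [Matrix.sub_apply]
    rw [SimpleGraph.degMatrix, Matrix.diagonal_apply_ne _ hne]
    simp [hnadj]
  -- positive definiteness and invertibility
  have hUUpd : LUU.PosDef := lap_submatrix_posDef G hG Vcutᶜ ⟨w0, hw0nU⟩
  have h1pd : L1.PosDef := lap_submatrix_posDef G hG V1 ⟨w0, hw0n1⟩
  have h2pd : L2.PosDef := lap_submatrix_posDef G hG V2 ⟨w0, hw0n2⟩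
  have hUUdet : IsUnit LUU.det := (Matrix.isUnit_iff_isUnit_det _).mp hUUpd.isUnit
  have h1det : IsUnit L1.det := (Matrix.isUnit_iff_isUnit_det _).mp h1pd.isUnit
  have h2det : IsUnit L2.det := (Matrix.isUnit_iff_isUnit_det _).mp h2pd.isUnit
  have hUUmul : LUU * LUU⁻¹ = 1 := Matrix.mul_nonsing_inv _ hUUdet
  have hUUmul' : LUU⁻¹ * LUU = 1 := Matrix.nonsing_inv_mul _ hUUdet
  have h1mul : L1 * L1⁻¹ = 1 := Matrix.mul_nonsing_inv _ h1det
  have h2mul : L2 * L2⁻¹ = 1 := Matrix.mul_nonsing_inv _ h2det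
  -- symmetry of the blocks
  have hLUUsymm : LUUᵀ = LUU := by
    ext u v
    show L v.val u.val = L u.val v.val
    exact hLab v.val u.val
  have hUUinvT : (LUU⁻¹)ᵀ = LUU⁻¹ := by
    rw [Matrix.transpose_nonsing_inv, hLUUsymm]
  have hLUCt : LUCᵀ = LCU := by
    ext c u
    show L u.val c.val = L c.val u.val
    exact hLab u.val c.val
  have hLCUt : LCUᵀ = LUC := by
    ext u c
    show L c.val u.val = L u.val c.val
    exact hLab c.val u.val
  have hLCCt : LCCᵀ = LCC := by
    ext c d
    show L d.val c.val = L c.val d.val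
    exact hLab d.val c.val
  have hSsymT : Sᵀ = S := by
    show (LCC - LCU * LUU⁻¹ * LUC)ᵀ = LCC - LCU * LUU⁻¹ * LUC
    rw [Matrix.transpose_sub, Matrix.transpose_mul, Matrix.transpose_mul, hLCCt, hUUinvT,
      hLUCt, hLCUt, Matrix.mul_assoc]
  have hSherm : S.IsHermitian := by
    have h : Sᴴ = Sᵀ := by
      ext c d
      rw [Matrix.conjTranspose_apply, Matrix.transpose_apply, star_trivial]
    rw [Matrix.IsHermitian, h, hSsymT]
  obtain ⟨hq1, hq2, hq3, hq4⟩ := matPinv_spec hSherm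
  obtain ⟨hp1, hp2, hp3, hp4⟩ := matPinv_spec hLherm
  -- the potential vector
  set xv : Fin n → ℝ := Pi.single s 1 - Pi.single t 1 with hxvdef
  set P : Matrix (Fin n) (Fin n) ℝ := matPinv L with hPdef
  set yv : Fin n → ℝ := P *ᵥ xv with hyvdef
  -- L *ᵥ yv = xv
  have hvL : (xv - L *ᵥ yv) ᵥ* L = 0 := by
    rw [Matrix.sub_vecMul]
    have h2 : (L *ᵥ yv) ᵥ* L = xv ᵥ* L := by
      rw [hyvdef, Matrix.mulVec_mulVec, ← hp3, Matrix.mulVec_transpose,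
        Matrix.vecMul_vecMul, Matrix.mul_assoc, ← Matrix.mul_assoc, hp1]
    rw [h2, sub_self]
  have hvker : L *ᵥ (xv - L *ᵥ yv) = 0 := by
    rw [← Matrix.vecMul_transpose, hLsym]
    exact hvL
  have hvconst : ∀ i j, (xv - L *ᵥ yv) i = (xv - L *ᵥ yv) j := by
    have h0 : Matrix.toLin' (G.lapMatrix ℝ) (xv - L *ᵥ yv) = 0 := by
      rw [Matrix.toLin'_apply]
      exact hvker
    rw [Matrix.toLin'_apply, SimpleGraph.lapMatrix_mulVec_eq_zero_iff_forall_reachable] at h0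
    exact fun i j => h0 i j (hG.preconnected i j)
  have hLy : L *ᵥ yv = xv := by
    have hdot : (xv - L *ᵥ yv) ⬝ᵥ (xv - L *ᵥ yv) = 0 := by
      have h1 : (xv - L *ᵥ yv) ⬝ᵥ (L *ᵥ yv) = 0 := by
        rw [Matrix.dotProduct_mulVec, hvL, zero_dotProduct]
      have h2 : (xv - L *ᵥ yv) ⬝ᵥ xv = 0 := by
        rw [hxvdef, dotProduct_sub, dotProduct_single, dotProduct_single,
          hvconst s t]
        ring
      rw [dotProduct_sub, h1, h2, sub_zero]
    have hz : ∀ i, (xv - L *ᵥ yv) i = 0 := by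
      intro i
      have hdot' : ∑ j, (xv - L *ᵥ yv) j * (xv - L *ᵥ yv) j = 0 := hdot
      have := (Finset.sum_eq_zero_iff_of_nonneg
        (fun j _ => mul_self_nonneg ((xv - L *ᵥ yv) j))).mp hdot' i (Finset.mem_univ i)
      exact mul_self_eq_zero.mp this
    have : xv - L *ᵥ yv = 0 := funext hz
    have := sub_eq_zero.mp this
    exact this.symm
  -- restricted vectors
  set xU : {x // x ∈ Vcutᶜ} → ℝ := fun u => xv u.val with hxUdef
  set yU : {x // x ∈ Vcutᶜ} → ℝ := fun u => yv u.val with hyUdef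
  set yC : {x // x ∈ Vcut} → ℝ := fun c => yv c.val with hyCdef
  have hxvC : ∀ c : {x // x ∈ Vcut}, xv c.val = 0 := by
    intro c
    have hcs : c.val ≠ s := fun h => hsC (h ▸ c.prop)
    have hct : c.val ≠ t := fun h => htC (h ▸ c.prop)
    rw [hxvdef, Pi.sub_apply, Pi.single_apply, Pi.single_apply, if_neg hcs, if_neg hct,
      sub_zero]
  have hxUeq : xU = (Pi.single ⟨s, hsU⟩ 1 - Pi.single ⟨t, htU⟩ 1 : {x // x ∈ Vcutᶜ} → ℝ) := by
    funext u
    have h1 : xU u = xv u.val := rfl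
    rw [h1, hxvdef, Pi.sub_apply, Pi.sub_apply, Pi.single_apply, Pi.single_apply,
      Pi.single_apply, Pi.single_apply]
    simp [Subtype.ext_iff]
  -- sum splitting
  have hsplit : ∀ (f : Fin n → ℝ),
      ∑ i, f i = (∑ u : {x // x ∈ Vcutᶜ}, f u.val) + ∑ c : {x // x ∈ Vcut}, f c.val := by
    intro f
    rw [Finset.sum_coe_sort, Finset.sum_coe_sort, Finset.sum_compl_add_sum]
  -- block equations
  have hU : LUU *ᵥ yU + LUC *ᵥ yC = xU := by
    funext u
    show (LUU *ᵥ yU) u + (LUC *ᵥ yC) u = xU u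
    have h1 : (L *ᵥ yv) u.val = xv u.val := congrFun hLy u.val
    have h2 : (L *ᵥ yv) u.val =
        (∑ u' : {x // x ∈ Vcutᶜ}, L u.val u'.val * yv u'.val) +
          ∑ c : {x // x ∈ Vcut}, L u.val c.val * yv c.val :=
      hsplit (fun j => L u.val j * yv j)
    calc (LUU *ᵥ yU) u + (LUC *ᵥ yC) u = (L *ᵥ yv) u.val := by rw [h2]; rfl
      _ = xU u := h1
  have hC : LCU *ᵥ yU + LCC *ᵥ yC = 0 := by
    funext c
    show (LCU *ᵥ yU) c + (LCC *ᵥ yC) c = 0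
    have h1 : (L *ᵥ yv) c.val = xv c.val := congrFun hLy c.val
    have h2 : (L *ᵥ yv) c.val =
        (∑ u' : {x // x ∈ Vcutᶜ}, L c.val u'.val * yv u'.val) +
          ∑ d : {x // x ∈ Vcut}, L c.val d.val * yv d.val :=
      hsplit (fun j => L c.val j * yv j)
    calc (LCU *ᵥ yU) c + (LCC *ᵥ yC) c = (L *ᵥ yv) c.val := by rw [h2]; rfl
      _ = 0 := by rw [h1, hxvC]
  have hyUsolve : yU = LUU⁻¹ *ᵥ (xU - LUC *ᵥ yC) := by
    have h := eq_sub_of_add_eq hU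
    calc yU = (LUU⁻¹ * LUU) *ᵥ yU := by rw [hUUmul', Matrix.one_mulVec]
      _ = LUU⁻¹ *ᵥ (LUU *ᵥ yU) := by rw [Matrix.mulVec_mulVec]
      _ = LUU⁻¹ *ᵥ (xU - LUC *ᵥ yC) := by rw [h]
  -- the q vector
  set q : {x // x ∈ Vcut} → ℝ := p ⟨s, hV1U hs⟩ - p ⟨t, hV2U ht⟩ with hqdef
  have hMt : (LUU⁻¹ * LUC)ᵀ = LCU * LUU⁻¹ := by
    rw [Matrix.transpose_mul, hUUinvT, hLUCt]
  have hent : ∀ (c : {x // x ∈ Vcut}) (u : {x // x ∈ Vcutᶜ}),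
      (LCU * LUU⁻¹) c u = (LUU⁻¹ * LUC) u c := by
    intro c u
    rw [← hMt]
    rfl
  have hq : (LCU * LUU⁻¹) *ᵥ xU = -q := by
    rw [hxUeq, Matrix.mulVec_sub, Matrix.mulVec_single, Matrix.mulVec_single]
    funext c
    show (LCU * LUU⁻¹) c ⟨s, hsU⟩ * 1 - (LCU * LUU⁻¹) c ⟨t, htU⟩ * 1 = -(q c)
    rw [hent, hent, hqdef]
    show (LUU⁻¹ * LUC) ⟨s, hsU⟩ c * 1 - (LUU⁻¹ * LUC) ⟨t, htU⟩ c * 1 =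
      -(-((LUU⁻¹ * LUC) ⟨s, hV1U hs⟩ c) - -((LUU⁻¹ * LUC) ⟨t, hV2U ht⟩ c))
    ring
  have hSq : S *ᵥ yC = q := by
    have h1 : LCC *ᵥ yC = -(LCU *ᵥ yU) := by
      have := hC
      rw [add_comm] at this
      exact eq_neg_of_add_eq_zero_left this
    calc S *ᵥ yC = LCC *ᵥ yC - (LCU * LUU⁻¹ * LUC) *ᵥ yC := by
          rw [show S = LCC - LCU * LUU⁻¹ * LUC from rfl, Matrix.sub_mulVec]
      _ = -(LCU *ᵥ (LUU⁻¹ *ᵥ (xU - LUC *ᵥ yC))) - (LCU * LUU⁻¹ * LUC) *ᵥ yC := by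
          rw [h1, hyUsolve]
      _ = -((LCU * LUU⁻¹) *ᵥ xU) := by
          rw [Matrix.mulVec_sub, Matrix.mulVec_sub, Matrix.mulVec_mulVec, Matrix.mulVec_mulVec,
            Matrix.mulVec_mulVec, Matrix.mul_assoc]
          abel
      _ = q := by rw [hq, neg_neg]
  have hqdot : q ⬝ᵥ (matPinv S *ᵥ q) = q ⬝ᵥ yC := by
    calc q ⬝ᵥ (matPinv S *ᵥ q)
        = (matPinv S *ᵥ q) ⬝ᵥ q := dotProduct_comm _ _
      _ = (matPinv S *ᵥ q) ⬝ᵥ (S *ᵥ yC) := by rw [hSq]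
      _ = ((matPinv S *ᵥ q) ᵥ* S) ⬝ᵥ yC := Matrix.dotProduct_mulVec _ _ _
      _ = (Sᵀ *ᵥ (matPinv S *ᵥ q)) ⬝ᵥ yC := by rw [Matrix.mulVec_transpose]
      _ = ((S * matPinv S) *ᵥ q) ⬝ᵥ yC := by rw [hSsymT, Matrix.mulVec_mulVec]
      _ = ((S * matPinv S) *ᵥ (S *ᵥ yC)) ⬝ᵥ yC := by rw [hSq]
      _ = ((S * matPinv S * S) *ᵥ yC) ⬝ᵥ yC := by rw [Matrix.mulVec_mulVec]
      _ = (S *ᵥ yC) ⬝ᵥ yC := by rw [hq1]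
      _ = q ⬝ᵥ yC := by rw [hSq]
  -- reduce rdist to the U block
  have hr1 : rdist G s t = xU ⬝ᵥ yU := by
    have h0 : rdist G s t = xv ⬝ᵥ yv := rfl
    have h2 : xv ⬝ᵥ yv = (∑ u : {x // x ∈ Vcutᶜ}, xv u.val * yv u.val) +
        ∑ c : {x // x ∈ Vcut}, xv c.val * yv c.val := hsplit (fun i => xv i * yv i)
    have hz : ∑ c : {x // x ∈ Vcut}, xv c.val * yv c.val = 0 :=
      Finset.sum_eq_zero (fun c _ => by rw [hxvC c, zero_mul])
    rw [h0, h2, hz, add_zero]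
    rfl
  have hsplit1 : xU ⬝ᵥ yU = xU ⬝ᵥ (LUU⁻¹ *ᵥ xU) + q ⬝ᵥ yC := by
    calc xU ⬝ᵥ yU
        = xU ⬝ᵥ (LUU⁻¹ *ᵥ xU - LUU⁻¹ *ᵥ (LUC *ᵥ yC)) := by
          rw [← Matrix.mulVec_sub, ← hyUsolve]
      _ = xU ⬝ᵥ (LUU⁻¹ *ᵥ xU) - xU ⬝ᵥ ((LUU⁻¹ * LUC) *ᵥ yC) := by
          rw [dotProduct_sub, Matrix.mulVec_mulVec]
      _ = xU ⬝ᵥ (LUU⁻¹ *ᵥ xU) + q ⬝ᵥ yC := by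
          have hx : xU ⬝ᵥ ((LUU⁻¹ * LUC) *ᵥ yC) = -(q ⬝ᵥ yC) := by
            rw [Matrix.dotProduct_mulVec, ← Matrix.mulVec_transpose, hMt, hq,
              neg_dotProduct]
          rw [hx, sub_neg_eq_add]
  -- first term splitting
  set e1 : {x // x ∈ V1} → ℝ := Pi.single ⟨s, hs⟩ 1 with he1def
  set e2 : {x // x ∈ V2} → ℝ := Pi.single ⟨t, ht⟩ 1 with he2def
  set z1 : {x // x ∈ V1} → ℝ := L1⁻¹ *ᵥ e1 with hz1def
  set z2 : {x // x ∈ V2} → ℝ := L2⁻¹ *ᵥ e2 with hz2def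
  set w1 : {x // x ∈ Vcutᶜ} → ℝ := fun u => if h : u.val ∈ V1 then z1 ⟨u.val, h⟩ else 0
    with hw1def
  set w2 : {x // x ∈ Vcutᶜ} → ℝ := fun u => if h : u.val ∈ V2 then z2 ⟨u.val, h⟩ else 0
    with hw2def
  have hLw1 : LUU *ᵥ w1 = Pi.single ⟨s, hsU⟩ 1 := by
    funext u
    have hstep : ∑ j : {x // x ∈ Vcutᶜ}, L u.val j.val *
        (if h : j.val ∈ V1 then z1 ⟨j.val, h⟩ else 0)
        = ∑ j : {x // x ∈ V1}, L u.val j.val * z1 j := by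
      calc ∑ j : {x // x ∈ Vcutᶜ}, L u.val j.val * (if h : j.val ∈ V1 then z1 ⟨j.val, h⟩ else 0)
          = ∑ a ∈ Vcutᶜ, L u.val a * (if h : a ∈ V1 then z1 ⟨a, h⟩ else 0) :=
            Finset.sum_coe_sort Vcutᶜ (fun a => L u.val a * (if h : a ∈ V1 then z1 ⟨a, h⟩ else 0))
        _ = ∑ a ∈ V1, L u.val a * (if h : a ∈ V1 then z1 ⟨a, h⟩ else 0) :=
            (Finset.sum_subset hV1U (fun a _ ha => by rw [dif_neg ha, mul_zero])).symm
        _ = ∑ j : {x // x ∈ V1}, L u.val j.val * (if h : j.val ∈ V1 then z1 ⟨j.val, h⟩ else 0) :=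
            (Finset.sum_coe_sort V1 (fun a => L u.val a * (if h : a ∈ V1 then z1 ⟨a, h⟩ else 0))).symm
        _ = ∑ j : {x // x ∈ V1}, L u.val j.val * z1 j := by
            refine Finset.sum_congr rfl fun j _ => ?_
            rw [dif_pos j.prop]
    have hunf : (LUU *ᵥ w1) u = ∑ j : {x // x ∈ V1}, L u.val j.val * z1 j := by
      rw [show (LUU *ᵥ w1) u = ∑ j : {x // x ∈ Vcutᶜ}, L u.val j.val *
        (if h : j.val ∈ V1 then z1 ⟨j.val, h⟩ else 0) from rfl]
      exact hstep
    rw [hunf]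
    by_cases hu : u.val ∈ V1
    · have hLz : ∑ j : {x // x ∈ V1}, L u.val j.val * z1 j = (L1 *ᵥ z1) ⟨u.val, hu⟩ := rfl
      rw [hLz, hz1def, Matrix.mulVec_mulVec, h1mul, Matrix.one_mulVec]
      rw [he1def]
      rw [Pi.single_apply, Pi.single_apply]
      by_cases h : u.val = s
      · rw [if_pos (show (⟨u.val, hu⟩ : {x // x ∈ V1}) = ⟨s, hs⟩ from Subtype.ext h),
          if_pos (show u = (⟨s, hsU⟩ : {x // x ∈ Vcutᶜ}) from Subtype.ext h)]
      · rw [if_neg (show ¬((⟨u.val, hu⟩ : {x // x ∈ V1}) = ⟨s, hs⟩) from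
            fun heq => h (congrArg Subtype.val heq)),
          if_neg (show ¬(u = (⟨s, hsU⟩ : {x // x ∈ Vcutᶜ})) from
            fun heq => h (congrArg Subtype.val heq))]
    · have hzero : ∀ j : {x // x ∈ V1}, L u.val j.val = 0 := fun j => by
        rw [hLab]
        exact hzero1 j.val j.prop u.val hu (Finset.mem_compl.mp u.prop)
      rw [Finset.sum_eq_zero (fun j _ => by rw [hzero, zero_mul])]
      rw [Pi.single_apply, if_neg]
      intro h
      exact hu (Subtype.ext_iff.mp h ▸ hs)
  have hLw2 : LUU *ᵥ w2 = Pi.single ⟨t, htU⟩ 1 := by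
    funext u
    have hstep : ∑ j : {x // x ∈ Vcutᶜ}, L u.val j.val *
        (if h : j.val ∈ V2 then z2 ⟨j.val, h⟩ else 0)
        = ∑ j : {x // x ∈ V2}, L u.val j.val * z2 j := by
      calc ∑ j : {x // x ∈ Vcutᶜ}, L u.val j.val * (if h : j.val ∈ V2 then z2 ⟨j.val, h⟩ else 0)
          = ∑ a ∈ Vcutᶜ, L u.val a * (if h : a ∈ V2 then z2 ⟨a, h⟩ else 0) :=
            Finset.sum_coe_sort Vcutᶜ (fun a => L u.val a * (if h : a ∈ V2 then z2 ⟨a, h⟩ else 0))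
        _ = ∑ a ∈ V2, L u.val a * (if h : a ∈ V2 then z2 ⟨a, h⟩ else 0) :=
            (Finset.sum_subset hV2U (fun a _ ha => by rw [dif_neg ha, mul_zero])).symm
        _ = ∑ j : {x // x ∈ V2}, L u.val j.val * (if h : j.val ∈ V2 then z2 ⟨j.val, h⟩ else 0) :=
            (Finset.sum_coe_sort V2 (fun a => L u.val a * (if h : a ∈ V2 then z2 ⟨a, h⟩ else 0))).symm
        _ = ∑ j : {x // x ∈ V2}, L u.val j.val * z2 j := by
            refine Finset.sum_congr rfl fun j _ => ?_
            rw [dif_pos j.prop]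
    have hunf : (LUU *ᵥ w2) u = ∑ j : {x // x ∈ V2}, L u.val j.val * z2 j := by
      rw [show (LUU *ᵥ w2) u = ∑ j : {x // x ∈ Vcutᶜ}, L u.val j.val *
        (if h : j.val ∈ V2 then z2 ⟨j.val, h⟩ else 0) from rfl]
      exact hstep
    rw [hunf]
    by_cases hu : u.val ∈ V2
    · have hLz : ∑ j : {x // x ∈ V2}, L u.val j.val * z2 j = (L2 *ᵥ z2) ⟨u.val, hu⟩ := rfl
      rw [hLz, hz2def, Matrix.mulVec_mulVec, h2mul, Matrix.one_mulVec]
      rw [he2def]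
      rw [Pi.single_apply, Pi.single_apply]
      by_cases h : u.val = t
      · rw [if_pos (show (⟨u.val, hu⟩ : {x // x ∈ V2}) = ⟨t, ht⟩ from Subtype.ext h),
          if_pos (show u = (⟨t, htU⟩ : {x // x ∈ Vcutᶜ}) from Subtype.ext h)]
      · rw [if_neg (show ¬((⟨u.val, hu⟩ : {x // x ∈ V2}) = ⟨t, ht⟩) from
            fun heq => h (congrArg Subtype.val heq)),
          if_neg (show ¬(u = (⟨t, htU⟩ : {x // x ∈ Vcutᶜ})) from
            fun heq => h (congrArg Subtype.val heq))]
    · have hzero : ∀ j : {x // x ∈ V2}, L u.val j.val = 0 := fun j => by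
        rw [hLab]
        exact hzero2 j.val j.prop u.val hu (Finset.mem_compl.mp u.prop)
      rw [Finset.sum_eq_zero (fun j _ => by rw [hzero, zero_mul])]
      rw [Pi.single_apply, if_neg]
      intro h
      exact hu (Subtype.ext_iff.mp h ▸ ht)
  have hw1inv : w1 = LUU⁻¹ *ᵥ Pi.single ⟨s, hsU⟩ 1 := by
    calc w1 = (LUU⁻¹ * LUU) *ᵥ w1 := by rw [hUUmul', Matrix.one_mulVec]
      _ = LUU⁻¹ *ᵥ (LUU *ᵥ w1) := by rw [Matrix.mulVec_mulVec]
      _ = LUU⁻¹ *ᵥ Pi.single ⟨s, hsU⟩ 1 := by rw [hLw1]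
  have hw2inv : w2 = LUU⁻¹ *ᵥ Pi.single ⟨t, htU⟩ 1 := by
    calc w2 = (LUU⁻¹ * LUU) *ᵥ w2 := by rw [hUUmul', Matrix.one_mulVec]
      _ = LUU⁻¹ *ᵥ (LUU *ᵥ w2) := by rw [Matrix.mulVec_mulVec]
      _ = LUU⁻¹ *ᵥ Pi.single ⟨t, htU⟩ 1 := by rw [hLw2]
  -- values of w1, w2
  have hw1s : w1 ⟨s, hsU⟩ = z1 ⟨s, hs⟩ := by rw [hw1def]; exact dif_pos hs
  have hw1t : w1 ⟨t, htU⟩ = 0 := by rw [hw1def]; exact dif_neg htn1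
  have hw2s : w2 ⟨s, hsU⟩ = 0 := by rw [hw2def]; exact dif_neg hsn2
  have hw2t : w2 ⟨t, htU⟩ = z2 ⟨t, ht⟩ := by rw [hw2def]; exact dif_pos ht
  have hfirst : xU ⬝ᵥ (LUU⁻¹ *ᵥ xU) = e1 ⬝ᵥ (L1⁻¹ *ᵥ e1) + e2 ⬝ᵥ (L2⁻¹ *ᵥ e2) := by
    have hre1 : e1 ⬝ᵥ (L1⁻¹ *ᵥ e1) = z1 ⟨s, hs⟩ := by
      rw [he1def, ← hz1def, single_dotProduct, one_mul]
    have hre2 : e2 ⬝ᵥ (L2⁻¹ *ᵥ e2) = z2 ⟨t, ht⟩ := by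
      rw [he2def, ← hz2def, single_dotProduct, one_mul]
    rw [hxUeq, Matrix.mulVec_sub, ← hw1inv, ← hw2inv, sub_dotProduct,
      single_dotProduct, single_dotProduct, Pi.sub_apply, Pi.sub_apply,
      hw1s, hw1t, hw2s, hw2t, hre1, hre2]
    ring
  -- put everything together
  rw [hr1, hsplit1, hfirst, ← hqdot]
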